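/- Let T > 0, let f : ℝ^N × [0,T] → ℝ^N be continuous and continuously differentiable in its first argument. Let u : [0,T] → ℝ^N be differentiable with u̇(t) = f(u(t), t) on [0,T] and u(0) = u₀. Let U : [0,T] → ℝ^N be continuous with U(0) = u₀, differentiable outside a finite set F ⊂ [0,T], and define the residual R(t) = U̇(t) − f(U(t), t) for t ∉ F, assumed integrable on [0,T]. Define e = U − u, the averaged Jacobian J(t) = ∫₀¹ D_u f(s·u(t) + (1−s)·U(t), t) ds, and suppose e(T) ≠ 0. Let φ : [0,T] → ℝ^N be differentiable with −φ̇(t) = J(t)ᵀ φ(t) on [0,T] and φ(T) = e(T)/‖e(T)‖, where ‖·‖ is the Euclidean norm. Then ‖e(T)‖ = ∫₀ᵀ ⟨R(t), φ(t)⟩ dt. -/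

import Mathlib

open MeasureTheory

/-- A posteriori error representation for the continuous Galerkin
method: if `u̇ = f(u,·)`, `u(0) = u₀`, `U` is continuous with `U(0) = u₀` and
differentiable outside a finite set with residual `R = U̇ − f(U,·)`, `e = U − u`,
`J(t) = ∫₀¹ D_u f(su + (1−s)U, t) ds`, `e(T) ≠ 0`, and `φ` solves the dual
problem `−φ̇ = J*φ`, `φ(T) = e(T)/‖e(T)‖`, then `‖e(T)‖ = ∫₀ᵀ (R, φ) dt`. -/
theorem stmt8 (N : ℕ) (T : ℝ) (hT : 0 < T)
    (f : EuclideanSpace ℝ (Fin N) → ℝ → EuclideanSpace ℝ (Fin N))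
    (hf_cont : Continuous fun p : EuclideanSpace ℝ (Fin N) × ℝ => f p.1 p.2)
    (Df : EuclideanSpace ℝ (Fin N) → ℝ →
      (EuclideanSpace ℝ (Fin N) →L[ℝ] EuclideanSpace ℝ (Fin N)))
    (hDf : ∀ x t, HasFDerivAt (fun y => f y t) (Df x t) x)
    (hDf_cont : Continuous fun p : EuclideanSpace ℝ (Fin N) × ℝ => Df p.1 p.2)
    (u₀ : EuclideanSpace ℝ (Fin N))
    (u : ℝ → EuclideanSpace ℝ (Fin N))
    (hu : ∀ t ∈ Set.Icc (0 : ℝ) T, HasDerivAt u (f (u t) t) t)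
    (hu0 : u 0 = u₀)
    (U : ℝ → EuclideanSpace ℝ (Fin N))
    (hU_cont : ContinuousOn U (Set.Icc (0 : ℝ) T))
    (hU0 : U 0 = u₀)
    (F : Set ℝ) (hF : F.Finite) (hFsub : F ⊆ Set.Icc (0 : ℝ) T)
    (hU_diff : ∀ t ∈ Set.Icc (0 : ℝ) T \ F, DifferentiableAt ℝ U t)
    (R : ℝ → EuclideanSpace ℝ (Fin N))
    (hR : ∀ t ∈ Set.Icc (0 : ℝ) T \ F, R t = deriv U t - f (U t) t)
    (hR_int : IntervalIntegrable R volume 0 T)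
    (e : ℝ → EuclideanSpace ℝ (Fin N)) (he : e = U - u)
    (J : ℝ → (EuclideanSpace ℝ (Fin N) →L[ℝ] EuclideanSpace ℝ (Fin N)))
    (hJ : ∀ t, J t = ∫ s in (0 : ℝ)..1, Df (s • u t + (1 - s) • U t) t)
    (heT : e T ≠ 0)
    (φ : ℝ → EuclideanSpace ℝ (Fin N))
    (hφ : ∀ t ∈ Set.Icc (0 : ℝ) T,
      HasDerivAt φ (-(ContinuousLinearMap.adjoint (J t) (φ t))) t)
    (hφT : φ T = ‖e T‖⁻¹ • e T) :
    ‖e T‖ = ∫ t in (0 : ℝ)..T, (inner ℝ (R t) (φ t) : ℝ) := by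
  have hu_cont : ContinuousOn u (Set.Icc (0 : ℝ) T) :=
    fun t ht => ((hu t ht).continuousAt).continuousWithinAt
  have hφ_cont : ContinuousOn φ (Set.Icc (0 : ℝ) T) :=
    fun t ht => ((hφ t ht).continuousAt).continuousWithinAt
  -- the mean value identity : f (U t) t - f (u t) t = J t (U t - u t)
  have hmv : ∀ t, f (U t) t - f (u t) t = J t (U t - u t) := by
    intro t
    set γ : ℝ → EuclideanSpace ℝ (Fin N) := fun s => s • u t + (1 - s) • U t with hγdef
    have hγ : ∀ s : ℝ, HasDerivAt γ (u t - U t) s := by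
      intro s
      have h1 : HasDerivAt (fun s : ℝ => s • u t) ((1 : ℝ) • u t) s :=
        (hasDerivAt_id s).smul_const (u t)
      have h2 : HasDerivAt (fun s : ℝ => (1 - s) • U t) ((-1 : ℝ) • U t) s := by
        have h3 : HasDerivAt (fun s : ℝ => (1 : ℝ) - s) (-1 : ℝ) s := by
          simpa using (hasDerivAt_id s).const_sub (1 : ℝ)
        exact h3.smul_const (U t)
      exact (h1.add h2).congr_deriv (by simp [sub_eq_add_neg])
    have hγcont : Continuous γ := by
      exact (continuous_id.smul continuous_const).add
        ((continuous_const.sub continuous_id).smul continuous_const)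
    have hcontD : Continuous fun s : ℝ => Df (γ s) t :=
      hDf_cont.comp (hγcont.prodMk continuous_const)
    have hψ : ∀ s ∈ Set.uIcc (0 : ℝ) 1,
        HasDerivAt (fun s => f (γ s) t) (Df (γ s) t (u t - U t)) s := by
      intro s _
      exact (hDf (γ s) t).comp_hasDerivAt s (hγ s)
    have hint : IntervalIntegrable (fun s => Df (γ s) t (u t - U t)) volume 0 1 :=
      (hcontD.clm_apply continuous_const).intervalIntegrable 0 1
    have hftc : ∫ s in (0 : ℝ)..1, Df (γ s) t (u t - U t)
        = f (γ 1) t - f (γ 0) t :=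
      intervalIntegral.integral_eq_sub_of_hasDerivAt hψ hint
    have hγ1 : γ 1 = u t := by simp [hγdef]
    have hγ0 : γ 0 = U t := by simp [hγdef]
    rw [hγ1, hγ0] at hftc
    have hDint : IntegrableOn (fun s => Df (γ s) t) (Set.Ioc (0:ℝ) 1) volume :=
      hcontD.integrableOn_Ioc
    have happ : J t (U t - u t) = ∫ s in (0:ℝ)..1, Df (γ s) t (U t - u t) := by
      rw [hJ t]
      rw [intervalIntegral.integral_of_le zero_le_one,
        intervalIntegral.integral_of_le zero_le_one]
      exact ContinuousLinearMap.integral_apply hDint (U t - u t)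
    have hneg : ∀ s : ℝ, Df (γ s) t (U t - u t) = -(Df (γ s) t (u t - U t)) := by
      intro s
      rw [← map_neg, neg_sub]
    rw [happ]
    simp_rw [hneg]
    rw [intervalIntegral.integral_neg, hftc, neg_sub]
  -- derivative of the pairing
  have key : ∀ t ∈ Set.Ioo (0 : ℝ) T \ F,
      HasDerivAt (fun t => (inner ℝ ((U - u) t) (φ t) : ℝ)) (inner ℝ (R t) (φ t)) t := by
    intro t ht
    have htI : t ∈ Set.Icc (0 : ℝ) T \ F := ⟨Set.Ioo_subset_Icc_self ht.1, ht.2⟩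
    have hU' : HasDerivAt U (deriv U t) t := (hU_diff t htI).hasDerivAt
    have he' : HasDerivAt (U - u) (deriv U t - f (u t) t) t := hU'.sub (hu t htI.1)
    have hφ' : HasDerivAt φ (-(ContinuousLinearMap.adjoint (J t) (φ t))) t :=
      hφ t htI.1
    have hg := he'.inner ℝ hφ'
    refine hg.congr_deriv ?_
    have hRt : R t = deriv U t - f (U t) t := hR t htI
    have hder : deriv U t - f (u t) t = R t + J t ((U - u) t) := by
      have hsub : (U - u) t = U t - u t := rfl
      rw [hRt, hsub, ← hmv t]
      abel
    rw [hder]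
    rw [inner_neg_right, inner_add_left, ContinuousLinearMap.adjoint_inner_right]
    ring
  -- integrability of the integrand
  have hC : ∃ C, ∀ t ∈ Set.Icc (0:ℝ) T, ‖φ t‖ ≤ C :=
    (isCompact_Icc).exists_bound_of_continuousOn hφ_cont
  obtain ⟨C, hC⟩ := hC
  have hint : IntervalIntegrable (fun t => (inner ℝ (R t) (φ t) : ℝ)) volume 0 T := by
    rw [intervalIntegrable_iff_integrableOn_Ioc_of_le hT.le]
    have hRm : AEStronglyMeasurable R (volume.restrict (Set.Ioc (0:ℝ) T)) :=
      hR_int.1.aestronglyMeasurable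
    have hφm : AEStronglyMeasurable φ (volume.restrict (Set.Ioc (0:ℝ) T)) :=
      (hφ_cont.mono Set.Ioc_subset_Icc_self).aestronglyMeasurable measurableSet_Ioc
    refine Integrable.mono' ((hR_int.1.norm).mul_const C) (hRm.inner hφm) ?_
    refine (ae_restrict_iff' measurableSet_Ioc).2 (Filter.Eventually.of_forall ?_)
    intro t ht
    calc ‖(inner ℝ (R t) (φ t) : ℝ)‖ ≤ ‖R t‖ * ‖φ t‖ := norm_inner_le_norm _ _
      _ ≤ ‖R t‖ * C := by
          exact mul_le_mul_of_nonneg_left (hC t (Set.Ioc_subset_Icc_self ht))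
            (norm_nonneg _)
  -- continuity of the pairing
  have hgc : ContinuousOn (fun t => (inner ℝ ((U - u) t) (φ t) : ℝ)) (Set.Icc (0:ℝ) T) :=
    (hU_cont.sub hu_cont).inner hφ_cont
  -- FTC
  have hFTC := integral_eq_of_hasDerivAt_off_countable_of_le
    (fun t => (inner ℝ ((U - u) t) (φ t) : ℝ)) (fun t => (inner ℝ (R t) (φ t) : ℝ))
    hT.le hF.countable hgc key hint
  rw [hFTC]
  have h0 : (inner ℝ ((U - u) 0) (φ 0) : ℝ) = 0 := by
    simp [Pi.sub_apply, hU0, hu0]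
  have hTval : (inner ℝ ((U - u) T) (φ T) : ℝ) = ‖e T‖ := by
    have heTe : (U - u) T = e T := by rw [he]
    rw [heTe, hφT, real_inner_smul_right, real_inner_self_eq_norm_sq]
    have hne : ‖e T‖ ≠ 0 := norm_ne_zero_iff.2 heT
    field_simp
  simp only [h0, hTval, sub_zero]
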